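/- arXiv:2009.12838 — 2 statements merged into one kernel-verified Lean document; each statement's English description precedes it below -/
import Mathlib

section
/- (Surplus maximization implies stability) Let X, Y be Polish spaces, μ ∈ P(X), ν ∈ P(Y), and Φ : X × Y → ℝ bounded continuous. If π ∈ Π(μ,ν) maximizes ∫ Φ dπ' over π' ∈ Π(μ,ν), then there exist U ∈ L¹(μ), W ∈ L¹(ν) with U(x) + W(y) ≥ Φ(x,y) everywhere and U(x) + W(y) = Φ(x,y) π-almost everywhere. -/
open MeasureTheory


/-- points all of whose open neighborhoods have positive measure -/
def msupp {Z : Type*} [TopologicalSpace Z] [MeasurableSpace Z] (π : Measure Z) : Set Z :=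
  {z | ∀ s : Set Z, IsOpen s → z ∈ s → 0 < π s}

theorem compl_msupp_null {Z : Type*} [TopologicalSpace Z] [SecondCountableTopology Z]
    [MeasurableSpace Z] (π : Measure Z) : π (msupp π)ᶜ = 0 := by
  have hb := TopologicalSpace.isBasis_countableBasis Z
  have hcount := TopologicalSpace.countable_countableBasis Z
  set B0 : Set (Set Z) := {b ∈ TopologicalSpace.countableBasis Z | π b = 0} with hB0
  have hsub : (msupp π)ᶜ ⊆ ⋃ b ∈ B0, b := by
    intro z hz
    simp only [msupp, Set.mem_compl_iff, Set.mem_setOf_eq, not_forall] at hz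
    obtain ⟨s, hs, hzs, hs0⟩ := hz
    have hs0' : π s = 0 := by
      by_contra h
      exact hs0 (pos_iff_ne_zero.mpr h)
    obtain ⟨b, hbB, hzb, hbs⟩ := hb.exists_subset_of_mem_open hzs hs
    exact Set.mem_biUnion ⟨hbB, measure_mono_null hbs hs0'⟩ hzb
  refine measure_mono_null hsub ?_
  rw [measure_biUnion_null_iff (hcount.mono (Set.sep_subset _ _))]
  exact fun b hb => hb.2



/-- integral bound for measures concentrated on a set -/
theorem integral_le_of_conc {Z : Type*} [MeasurableSpace Z] (ρ : Measure Z)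
    [IsProbabilityMeasure ρ] (f : Z → ℝ) (s : Set Z) (hρs : ρ sᶜ = 0) (c : ℝ)
    (hb : ∀ p ∈ s, f p ≤ c) (hf : Integrable f ρ) : ∫ p, f p ∂ρ ≤ c := by
  have hae : ∀ᵐ p ∂ρ, f p ≤ c := by
    rw [ae_iff]
    refine measure_mono_null ?_ hρs
    intro p hp
    simp only [Set.mem_setOf_eq] at hp
    exact fun hps => hp (hb p hps)
  calc ∫ p, f p ∂ρ ≤ ∫ _, c ∂ρ := integral_mono_ae hf (integrable_const c) hae
    _ = c := by simp
theorem integral_ge_of_conc {Z : Type*} [MeasurableSpace Z] (ρ : Measure Z)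
    [IsProbabilityMeasure ρ] (f : Z → ℝ) (s : Set Z) (hρs : ρ sᶜ = 0) (c : ℝ)
    (hb : ∀ p ∈ s, c ≤ f p) (hf : Integrable f ρ) : c ≤ ∫ p, f p ∂ρ := by
  have := integral_le_of_conc ρ (fun p => -f p) s hρs (-c) (fun p hp => by simpa using neg_le_neg (hb p hp)) hf.neg
  rw [integral_neg] at this
  linarith

theorem measure_map_finset_sum {Z W : Type*} [MeasurableSpace Z] [MeasurableSpace W]
    {f : Z → W} (hf : Measurable f) {ι : Type*} (s : Finset ι) (μ : ι → Measure Z) :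
    (∑ i ∈ s, μ i).map f = ∑ i ∈ s, (μ i).map f := by
  classical
  induction s using Finset.induction with
  | empty => simp
  | insert _ _ h ih => rw [Finset.sum_insert h, Finset.sum_insert h, Measure.map_add _ _ hf, ih]

theorem optimal_cm
    {X Y : Type*} [MetricSpace X] [SecondCountableTopology X] [MeasurableSpace X] [BorelSpace X]
    [MetricSpace Y] [SecondCountableTopology Y] [MeasurableSpace Y] [BorelSpace Y]
    (μ : Measure X) (ν : Measure Y) [IsProbabilityMeasure μ] [IsProbabilityMeasure ν]
    (Φ : X × Y → ℝ) (hΦc : Continuous Φ) (C : ℝ) (hΦb : ∀ p, |Φ p| ≤ C)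
    (π : Measure (X × Y)) [IsProbabilityMeasure π]
    (hopt : ∀ π' : Measure (X × Y), IsProbabilityMeasure π' →
      π'.map Prod.fst = π.map Prod.fst → π'.map Prod.snd = π.map Prod.snd →
      (∫ p, Φ p ∂π') ≤ ∫ p, Φ p ∂π) :
    ∀ (n : ℕ) (q : Fin (n + 1) → X × Y), (∀ i, q i ∈ msupp π) →
      ∑ i, Φ ((q (i + 1)).1, (q i).2) ≤ ∑ i, Φ (q i) := by
  intro n q hq
  by_contra hlt
  push_neg at hlt
  set gap : ℝ := ∑ i, Φ ((q (i + 1)).1, (q i).2) - ∑ i, Φ (q i) with hgap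
  have hgap0 : 0 < gap := by simp only [hgap]; linarith
  set ε : ℝ := gap / (4 * (n + 1)) with hε
  have hε0 : 0 < ε := by
    apply div_pos hgap0
    positivity
  -- modulus of continuity at the diagonal and cross points
  have h1 : ∀ i : Fin (n + 1), ∃ δ > 0, ∀ p, dist p (q i) < δ → |Φ p - Φ (q i)| < ε := by
    intro i
    have := Metric.continuous_iff.1 hΦc (q i) ε hε0
    simpa [Real.dist_eq] using this
  have h2 : ∀ i : Fin (n + 1), ∃ δ > 0, ∀ p,
      dist p ((q (i + 1)).1, (q i).2) < δ → |Φ p - Φ ((q (i + 1)).1, (q i).2)| < ε := by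
    intro i
    have := Metric.continuous_iff.1 hΦc ((q (i + 1)).1, (q i).2) ε hε0
    simpa [Real.dist_eq] using this
  choose δ hδ0 hδ using h1
  choose δ' hδ'0 hδ' using h2
  set a : Fin (n + 1) → ℝ := fun j => min (δ j) (δ' (j - 1)) with ha
  set b : Fin (n + 1) → ℝ := fun i => min (δ i) (δ' i) with hb
  have ha0 : ∀ j, 0 < a j := fun j => lt_min (hδ0 j) (hδ'0 (j - 1))
  have hb0 : ∀ i, 0 < b i := fun i => lt_min (hδ0 i) (hδ'0 i)
  set A : Fin (n + 1) → Set (X × Y) :=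
    fun i => Metric.ball (q i).1 (a i) ×ˢ Metric.ball (q i).2 (b i) with hA
  have hAopen : ∀ i, IsOpen (A i) := fun i => Metric.isOpen_ball.prod Metric.isOpen_ball
  have hAmem : ∀ i, q i ∈ A i := fun i =>
    ⟨Metric.mem_ball_self (ha0 i), Metric.mem_ball_self (hb0 i)⟩
  have hAmeas : ∀ i, MeasurableSet (A i) := fun i => (hAopen i).measurableSet
  -- bounds of Φ on the boxes
  have hdiag : ∀ i, ∀ p ∈ A i, Φ p ≤ Φ (q i) + ε := by
    intro i p hp
    have : dist p (q i) < δ i := by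
      rw [Prod.dist_eq]
      exact max_lt (lt_of_lt_of_le hp.1 (min_le_left _ _)) (lt_of_lt_of_le hp.2 (min_le_left _ _))
    have := hδ i p this
    have := abs_lt.1 this
    linarith [this.2]
  have hcross : ∀ i, ∀ p ∈ Metric.ball (q (i + 1)).1 (a (i + 1)) ×ˢ Metric.ball (q i).2 (b i),
      Φ ((q (i + 1)).1, (q i).2) - ε ≤ Φ p := by
    intro i p hp
    have h1 : dist p.1 (q (i + 1)).1 < δ' i := by
      have : a (i + 1) ≤ δ' i := by
        simp only [ha]
        rw [add_sub_cancel_right]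
        exact min_le_right _ _
      exact lt_of_lt_of_le hp.1 this
    have h2 : dist p.2 (q i).2 < δ' i := lt_of_lt_of_le hp.2 (min_le_right _ _)
    have : dist p ((q (i + 1)).1, (q i).2) < δ' i := by
      rw [Prod.dist_eq]; exact max_lt h1 h2
    have := abs_lt.1 (hδ' i p this)
    linarith [this.1]
  -- the measures
  set m : Fin (n + 1) → ENNReal := fun i => π (A i) with hm
  have hm0 : ∀ i, 0 < m i := fun i => hq i (A i) (hAopen i) (hAmem i)
  have hmtop : ∀ i, m i ≠ ⊤ := fun i => measure_ne_top π (A i)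
  set pi_ : Fin (n + 1) → Measure (X × Y) := fun i => (m i)⁻¹ • π.restrict (A i) with hpi
  have hpiprob : ∀ i, (pi_ i) Set.univ = 1 := by
    intro i
    simp only [hpi, Measure.smul_apply, Measure.restrict_apply MeasurableSet.univ,
      Set.univ_inter, smul_eq_mul]
    exact ENNReal.inv_mul_cancel (hm0 i).ne' (hmtop i)
  have hpiconc : ∀ i, pi_ i (A i)ᶜ = 0 := by
    intro i
    simp only [hpi, Measure.smul_apply, Measure.restrict_apply (hAmeas i).compl,
      Set.compl_inter_self, measure_empty, smul_eq_mul, mul_zero]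
  -- the perturbation size
  set α : ENNReal := (⨅ i, m i) / (n + 1 : ℕ) with hα
  have hiInf0 : 0 < ⨅ i, m i := by
    obtain ⟨i0, hi0⟩ := exists_eq_ciInf_of_finite (f := m)
    rw [← hi0]
    exact hm0 i0
  have hn1 : ((n + 1 : ℕ) : ENNReal) ≠ 0 := by positivity
  have hα0 : 0 < α := ENNReal.div_pos hiInf0.ne' (ENNReal.natCast_ne_top _)
  have hαtop : α ≠ ⊤ := by
    simp only [hα]
    exact (ENNReal.div_lt_top (ne_top_of_le_ne_top (hmtop 0) (iInf_le _ 0)) hn1).ne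
  have hαm : ∀ i, α * (m i)⁻¹ ≤ ((n + 1 : ℕ) : ENNReal)⁻¹ := by
    intro i
    have h1 : α ≤ m i * ((n + 1 : ℕ) : ENNReal)⁻¹ := by
      rw [hα, ENNReal.div_eq_inv_mul, mul_comm]
      exact mul_le_mul_left (iInf_le _ i) _
    calc α * (m i)⁻¹ ≤ m i * ((n + 1 : ℕ) : ENNReal)⁻¹ * (m i)⁻¹ := mul_le_mul_left h1 _
      _ = m i * (m i)⁻¹ * ((n + 1 : ℕ) : ENNReal)⁻¹ := by ring
      _ = ((n + 1 : ℕ) : ENNReal)⁻¹ := by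
          rw [ENNReal.mul_inv_cancel (hm0 i).ne' (hmtop i), one_mul]
  -- σ and τ
  set σ : Measure (X × Y) := ∑ i : Fin (n + 1), α • pi_ i with hσ
  set ρ : Fin (n + 1) → Measure (X × Y) :=
    fun i => ((pi_ (i + 1)).map Prod.fst).prod ((pi_ i).map Prod.snd) with hρ
  have hρprob : ∀ i, (ρ i) Set.univ = 1 := by
    intro i
    haveI hp1 : IsProbabilityMeasure (pi_ (i + 1)) := ⟨hpiprob (i + 1)⟩
    haveI hp2 : IsProbabilityMeasure (pi_ i) := ⟨hpiprob i⟩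
    haveI h1 : IsProbabilityMeasure ((pi_ (i + 1)).map Prod.fst) :=
      Measure.isProbabilityMeasure_map measurable_fst.aemeasurable
    haveI h2 : IsProbabilityMeasure ((pi_ i).map Prod.snd) :=
      Measure.isProbabilityMeasure_map measurable_snd.aemeasurable
    exact measure_univ
  set τ : Measure (X × Y) := ∑ i : Fin (n + 1), α • ρ i with hτ
  -- σ ≤ π
  have hσπ : σ ≤ π := by
    intro s
    simp only [hσ, Measure.coe_finset_sum, Finset.sum_apply, Measure.smul_apply, smul_eq_mul, hpi]
    have hterm : ∀ i : Fin (n + 1), α * ((m i)⁻¹ • π.restrict (A i)) s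
        ≤ ((n + 1 : ℕ) : ENNReal)⁻¹ * π s := by
      intro i
      rw [Measure.smul_apply, smul_eq_mul, ← mul_assoc]
      exact mul_le_mul (hαm i) (Measure.restrict_le_self s) zero_le zero_le
    calc ∑ i : Fin (n + 1), α * ((m i)⁻¹ • π.restrict (A i)) s
        ≤ ∑ _i : Fin (n + 1), ((n + 1 : ℕ) : ENNReal)⁻¹ * π s := Finset.sum_le_sum fun i _ => hterm i
      _ = ((n + 1 : ℕ) : ENNReal) * (((n + 1 : ℕ) : ENNReal)⁻¹ * π s) := by
          simp [Finset.card_univ]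
      _ = π s := by
          rw [← mul_assoc, ENNReal.mul_inv_cancel hn1 (ENNReal.natCast_ne_top _), one_mul]
  -- finiteness instances
  haveI hσfin : IsFiniteMeasure σ := by
    constructor
    exact lt_of_le_of_lt (Measure.le_iff'.1 hσπ Set.univ) (measure_lt_top π Set.univ)
  haveI hτfin : IsFiniteMeasure τ := by
    constructor
    rw [hτ, Measure.finset_sum_apply]
    have hterm : ∀ i : Fin (n + 1), (α • ρ i) Set.univ = α := by
      intro i
      rw [Measure.smul_apply, hρprob i, smul_eq_mul, mul_one]
    rw [Finset.sum_congr rfl fun i _ => hterm i]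
    simp only [Finset.sum_const, Finset.card_univ, Fintype.card_fin, nsmul_eq_mul]
    exact ENNReal.mul_lt_top (ENNReal.natCast_lt_top _) hαtop.lt_top
  haveI hπσfin : IsFiniteMeasure (π - σ) := Measure.isFiniteMeasure_sub
  -- marginals of ρ
  have hfstρ : ∀ i, (ρ i).map Prod.fst = (pi_ (i + 1)).map Prod.fst := by
    intro i
    haveI : IsProbabilityMeasure (pi_ i) := ⟨hpiprob i⟩
    haveI : IsProbabilityMeasure ((pi_ i).map Prod.snd) :=
      Measure.isProbabilityMeasure_map measurable_snd.aemeasurable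
    simp only [hρ]
    rw [Measure.map_fst_prod, measure_univ, one_smul]
  have hsndρ : ∀ i, (ρ i).map Prod.snd = (pi_ i).map Prod.snd := by
    intro i
    haveI : IsProbabilityMeasure (pi_ (i + 1)) := ⟨hpiprob (i + 1)⟩
    haveI : IsProbabilityMeasure ((pi_ (i + 1)).map Prod.fst) :=
      Measure.isProbabilityMeasure_map measurable_fst.aemeasurable
    simp only [hρ]
    rw [Measure.map_snd_prod, measure_univ, one_smul]
  -- marginals of σ and τ agree
  have hmapfst : τ.map Prod.fst = σ.map Prod.fst := by
    rw [hτ, hσ, measure_map_finset_sum measurable_fst, measure_map_finset_sum measurable_fst]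
    simp only [Measure.map_smul]
    calc ∑ i : Fin (n + 1), α • (ρ i).map Prod.fst
        = ∑ i : Fin (n + 1), α • (pi_ (i + 1)).map Prod.fst :=
          Finset.sum_congr rfl fun i _ => by rw [hfstρ]
      _ = ∑ i : Fin (n + 1), α • (pi_ i).map Prod.fst :=
          Fintype.sum_equiv (Equiv.addRight (1 : Fin (n + 1))) _ _ (fun i => rfl)
  have hmapsnd : τ.map Prod.snd = σ.map Prod.snd := by
    rw [hτ, hσ, measure_map_finset_sum measurable_snd, measure_map_finset_sum measurable_snd]
    simp only [Measure.map_smul]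
    exact Finset.sum_congr rfl fun i _ => by rw [hsndρ]
  -- the perturbed measure
  set π' : Measure (X × Y) := π - σ + τ with hπ'
  have hcancel : (π - σ) + σ = π := Measure.sub_add_cancel_of_le hσπ
  have hπ'fst : π'.map Prod.fst = π.map Prod.fst := by
    rw [hπ', Measure.map_add _ _ measurable_fst, hmapfst,
      ← Measure.map_add _ _ measurable_fst, hcancel]
  have hπ'snd : π'.map Prod.snd = π.map Prod.snd := by
    rw [hπ', Measure.map_add _ _ measurable_snd, hmapsnd,
      ← Measure.map_add _ _ measurable_snd, hcancel]
  haveI hπ'prob : IsProbabilityMeasure π' := by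
    constructor
    have h1 : π'.map Prod.fst Set.univ = π' Set.univ := by
      rw [Measure.map_apply measurable_fst MeasurableSet.univ, Set.preimage_univ]
    have h2 : π.map Prod.fst Set.univ = π Set.univ := by
      rw [Measure.map_apply measurable_fst MeasurableSet.univ, Set.preimage_univ]
    rw [← h1, hπ'fst, h2, measure_univ]
  -- integrability
  have hint : ∀ (ρ' : Measure (X × Y)) [IsFiniteMeasure ρ'], Integrable Φ ρ' := by
    intro ρ' _
    exact (integrable_const C).mono' hΦc.aestronglyMeasurable
      (Filter.Eventually.of_forall fun p => by simpa [Real.norm_eq_abs] using hΦb p)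
  have hπiint : ∀ i, Integrable Φ (pi_ i) := by
    intro i; haveI : IsProbabilityMeasure (pi_ i) := ⟨hpiprob i⟩; exact hint _
  have hρint : ∀ i, Integrable Φ (ρ i) := by
    intro i; haveI : IsProbabilityMeasure (ρ i) := ⟨hρprob i⟩; exact hint _
  -- concentration of ρ i on the cross box
  have hρconc : ∀ i,
      (ρ i) (Metric.ball (q (i + 1)).1 (a (i + 1)) ×ˢ Metric.ball (q i).2 (b i))ᶜ = 0 := by
    intro i
    haveI hp1 : IsProbabilityMeasure (pi_ (i + 1)) := ⟨hpiprob (i + 1)⟩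
    haveI hp2 : IsProbabilityMeasure (pi_ i) := ⟨hpiprob i⟩
    have hb1 : ((pi_ (i + 1)).map Prod.fst) (Metric.ball (q (i + 1)).1 (a (i + 1)))ᶜ = 0 := by
      rw [Measure.map_apply measurable_fst measurableSet_ball.compl]
      refine measure_mono_null ?_ (hpiconc (i + 1))
      intro p hp hpA
      exact hp hpA.1
    have hb2 : ((pi_ i).map Prod.snd) (Metric.ball (q i).2 (b i))ᶜ = 0 := by
      rw [Measure.map_apply measurable_snd measurableSet_ball.compl]
      refine measure_mono_null ?_ (hpiconc i)
      intro p hp hpA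
      exact hp hpA.2
    simp only [hρ]
    rw [Set.compl_prod_eq_union]
    refine le_antisymm (le_trans (measure_union_le _ _) ?_) zero_le
    rw [Measure.prod_prod, Measure.prod_prod, hb1, hb2]
    simp
  -- integral bounds
  have hπiub : ∀ i, ∫ p, Φ p ∂(pi_ i) ≤ Φ (q i) + ε := by
    intro i
    haveI : IsProbabilityMeasure (pi_ i) := ⟨hpiprob i⟩
    exact integral_le_of_conc _ _ (A i) (hpiconc i) _ (hdiag i) (hπiint i)
  have hρilb : ∀ i, Φ ((q (i + 1)).1, (q i).2) - ε ≤ ∫ p, Φ p ∂(ρ i) := by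
    intro i
    haveI : IsProbabilityMeasure (ρ i) := ⟨hρprob i⟩
    exact integral_ge_of_conc _ _ _ (hρconc i) _ (hcross i) (hρint i)
  have hσeq : ∫ p, Φ p ∂σ = ∑ i : Fin (n + 1), α.toReal * ∫ p, Φ p ∂(pi_ i) := by
    rw [hσ, integral_finset_sum_measure (fun i _ => (hπiint i).smul_measure hαtop)]
    exact Finset.sum_congr rfl fun i _ => by rw [integral_smul_measure, smul_eq_mul]
  have hτeq : ∫ p, Φ p ∂τ = ∑ i : Fin (n + 1), α.toReal * ∫ p, Φ p ∂(ρ i) := by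
    rw [hτ, integral_finset_sum_measure (fun i _ => (hρint i).smul_measure hαtop)]
    exact Finset.sum_congr rfl fun i _ => by rw [integral_smul_measure, smul_eq_mul]
  have hα0' : 0 < α.toReal := ENNReal.toReal_pos hα0.ne' hαtop
  have hn1R : (0 : ℝ) < (n : ℝ) + 1 := by positivity
  -- strict comparison of the two sums
  have hτσ : ∫ p, Φ p ∂σ < ∫ p, Φ p ∂τ := by
    rw [hσeq, hτeq]
    have hstep1 : ∑ i : Fin (n + 1), α.toReal * ∫ p, Φ p ∂(pi_ i)
        ≤ ∑ i : Fin (n + 1), α.toReal * (Φ (q i) + ε) :=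
      Finset.sum_le_sum fun i _ => mul_le_mul_of_nonneg_left (hπiub i) hα0'.le
    have hstep2 : ∑ i : Fin (n + 1), α.toReal * (Φ ((q (i + 1)).1, (q i).2) - ε)
        ≤ ∑ i : Fin (n + 1), α.toReal * ∫ p, Φ p ∂(ρ i) :=
      Finset.sum_le_sum fun i _ => mul_le_mul_of_nonneg_left (hρilb i) hα0'.le
    have hmid : ∑ i : Fin (n + 1), α.toReal * (Φ (q i) + ε)
        < ∑ i : Fin (n + 1), α.toReal * (Φ ((q (i + 1)).1, (q i).2) - ε) := by
      rw [← Finset.mul_sum, ← Finset.mul_sum]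
      apply mul_lt_mul_of_pos_left ?_ hα0'
      rw [Finset.sum_add_distrib, Finset.sum_sub_distrib]
      simp only [Finset.sum_const, Finset.card_univ, Fintype.card_fin, nsmul_eq_mul]
      have hεval : ((n : ℝ) + 1) * ε = gap / 4 := by
        rw [hε]
        field_simp
      push_cast
      rw [hεval]
      rw [hgap]
      linarith
    linarith
  -- final contradiction
  have h1 : ∫ p, Φ p ∂π = ∫ p, Φ p ∂(π - σ) + ∫ p, Φ p ∂σ := by
    conv_lhs => rw [← hcancel]
    exact integral_add_measure (hint _) (hint _)
  have h2 : ∫ p, Φ p ∂π' = ∫ p, Φ p ∂(π - σ) + ∫ p, Φ p ∂τ := by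
    rw [hπ']
    exact integral_add_measure (hint _) (hint _)
  have hfin := hopt π' hπ'prob hπ'fst hπ'snd
  rw [h1, h2] at hfin
  linarith


section Rockafellar
variable {X Y : Type*} [MetricSpace X] [MetricSpace Y]
  (Φ : X × Y → ℝ) (Γ : Set (X × Y)) (base : X × Y)

/-- chains in Γ starting at base -/
def Chains : Type _ :=
  Σ n : ℕ, {q : Fin (n + 1) → X × Y // q 0 = base ∧ ∀ i, q i ∈ Γ}

noncomputable def chainVal (x : X) (c : Chains Γ base) : ℝ :=
  Φ (x, (c.2.1 (Fin.last c.1)).2)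
    + ∑ i : Fin c.1, Φ ((c.2.1 i.succ).1, (c.2.1 i.castSucc).2)
    - ∑ i, Φ (c.2.1 i)

theorem rockafellar (hΦc : Continuous Φ) (C : ℝ) (hΦb : ∀ p, |Φ p| ≤ C)
    (hne : Γ.Nonempty)
    (hCM : ∀ (n : ℕ) (q : Fin (n + 1) → X × Y), (∀ i, q i ∈ Γ) →
      ∑ i, Φ ((q (i + 1)).1, (q i).2) ≤ ∑ i, Φ (q i)) :
    ∃ (U : X → ℝ) (W : Y → ℝ), LowerSemicontinuous U ∧ LowerSemicontinuous W ∧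
      (∀ x, |U x| ≤ 2 * C) ∧ (∀ y, |W y| ≤ 3 * C) ∧
      (∀ p : X × Y, Φ p ≤ U p.1 + W p.2) ∧ (∀ p ∈ Γ, U p.1 + W p.2 = Φ p) := by
  obtain ⟨b0, hb0⟩ := hne
  haveI : Nonempty (Chains Γ b0) :=
    ⟨⟨0, fun _ => b0, rfl, fun _ => hb0⟩⟩
  have hC0 : 0 ≤ C := le_trans (abs_nonneg _) (hΦb b0)
  -- value at base point is nonpositive, by cyclical monotonicity
  have hval0 : ∀ c : Chains Γ b0, chainVal Φ Γ b0 b0.1 c ≤ 0 := by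
    intro ⟨n, q, hq0, hqΓ⟩
    have h := hCM n q hqΓ
    have hsplit : ∑ i : Fin (n+1), Φ ((q (i + 1)).1, (q i).2)
        = ∑ i : Fin n, Φ ((q i.succ).1, (q i.castSucc).2) + Φ ((q 0).1, (q (Fin.last n)).2) := by
      rw [Fin.sum_univ_castSucc (f := fun i : Fin (n+1) => Φ ((q (i + 1)).1, (q i).2))]
      congr 1
      · apply Finset.sum_congr rfl
        intro i _
        congr 2
        rw [Fin.coeSucc_eq_succ]
      · congr 2
        rw [Fin.last_add_one]
    rw [hsplit, hq0] at h
    simp only [chainVal]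
    linarith
  -- translation identity: chainVal x c - chainVal x' c = Φ(x, ylast) - Φ(x', ylast)
  have htrans : ∀ (x x' : X) (c : Chains Γ b0),
      chainVal Φ Γ b0 x c - chainVal Φ Γ b0 x' c
        = Φ (x, (c.2.1 (Fin.last c.1)).2) - Φ (x', (c.2.1 (Fin.last c.1)).2) := by
    intro x x' c; simp only [chainVal]; ring
  have hub : ∀ (x : X) (c : Chains Γ b0), chainVal Φ Γ b0 x c ≤ 2 * C := by
    intro x c
    have h0 := hval0 c
    have ht := htrans x b0.1 c
    have h1 := abs_le.1 (hΦb (x, (c.2.1 (Fin.last c.1)).2))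
    have h2 := abs_le.1 (hΦb (b0.1, (c.2.1 (Fin.last c.1)).2))
    linarith
  have bdd : ∀ x : X, BddAbove (Set.range fun c => chainVal Φ Γ b0 x c) := by
    intro x
    exact ⟨2 * C, by rintro r ⟨c, rfl⟩; exact hub x c⟩
  set U : X → ℝ := fun x => ⨆ c : Chains Γ b0, chainVal Φ Γ b0 x c with hU
  -- base chain
  set c0 : Chains Γ b0 := ⟨0, fun _ => b0, rfl, fun _ => hb0⟩ with hc0
  have hc0val : ∀ x, chainVal Φ Γ b0 x c0 = Φ (x, b0.2) - Φ b0 := by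
    intro x
    simp only [chainVal, hc0, Finset.univ_unique, Finset.sum_const, Finset.card_singleton,
      one_smul, Finset.sum_empty]
    simp
    show Φ (x, b0.2) - ∑ _i : Fin (0 + 1), Φ b0 = _
    simp
  have hUlb : ∀ x, Φ (x, b0.2) - Φ b0 ≤ U x := by
    intro x
    rw [← hc0val x]
    exact le_ciSup (bdd x) c0
  have hUub : ∀ x, U x ≤ 2 * C := fun x => ciSup_le (hub x)
  have hUbd : ∀ x, |U x| ≤ 2 * C := by
    intro x
    rw [abs_le]
    refine ⟨?_, hUub x⟩
    have h1 := abs_le.1 (hΦb (x, b0.2))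
    have h2 := abs_le.1 (hΦb b0)
    have := hUlb x
    linarith
  -- the append (extension) property
  have happend : ∀ (a : X) (b : Y), (a, b) ∈ Γ → ∀ x : X,
      Φ (x, b) - Φ (a, b) + U a ≤ U x := by
    intro a b hab x
    have key : ∀ c : Chains Γ b0,
        Φ (x, b) - Φ (a, b) + chainVal Φ Γ b0 a c ≤ U x := by
      intro ⟨n, q, hq0, hqΓ⟩
      -- extended chain
      set q' : Fin (n + 2) → X × Y := Fin.snoc q (a, b) with hq'
      have hq'0 : q' 0 = b0 := by
        rw [hq', show (0 : Fin (n+2)) = Fin.castSucc 0 by rfl, Fin.snoc_castSucc]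
        exact hq0
      have hq'Γ : ∀ i, q' i ∈ Γ := by
        intro i
        induction i using Fin.lastCases with
        | last => rw [hq', Fin.snoc_last]; exact hab
        | cast j => rw [hq', Fin.snoc_castSucc]; exact hqΓ j
      set c' : Chains Γ b0 := ⟨n + 1, q', hq'0, hq'Γ⟩ with hc'
      have hval : chainVal Φ Γ b0 x c' = Φ (x, b) - Φ (a, b) + chainVal Φ Γ b0 a ⟨n, q, hq0, hqΓ⟩ := by
        simp only [chainVal, hc']
        have e1 : q' (Fin.last (n+1)) = (a, b) := by rw [hq', Fin.snoc_last]
        have e2 : ∑ i : Fin (n+2), Φ (q' i) = ∑ i : Fin (n+1), Φ (q i) + Φ (a, b) := by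
          rw [Fin.sum_univ_castSucc (f := fun i : Fin (n+2) => Φ (q' i))]
          congr 1
          · exact Finset.sum_congr rfl fun i _ => by rw [hq', Fin.snoc_castSucc]
          · rw [e1]
        have e3 : ∑ i : Fin (n+1), Φ ((q' i.succ).1, (q' i.castSucc).2)
            = ∑ i : Fin n, Φ ((q i.succ).1, (q i.castSucc).2) + Φ (a, (q (Fin.last n)).2) := by
          rw [Fin.sum_univ_castSucc (f := fun i : Fin (n+1) => Φ ((q' i.succ).1, (q' i.castSucc).2))]
          congr 1
          · refine Finset.sum_congr rfl fun i _ => ?_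
            simp only [hq', Fin.succ_castSucc, Fin.snoc_castSucc]
          · simp only [hq', Fin.succ_last, Fin.snoc_last, Fin.snoc_castSucc]
        show Φ (x, (q' (Fin.last (n+1))).2) + ∑ i : Fin (n+1), Φ ((q' i.succ).1, (q' i.castSucc).2)
          - ∑ i : Fin (n+2), Φ (q' i) = _
        rw [e1, e2, e3]
        simp only [chainVal]
        ring
      have hle : chainVal Φ Γ b0 x c' ≤ U x := le_ciSup (bdd x) c'
      rw [hval] at hle
      exact hle
    have : U a ≤ U x - (Φ (x, b) - Φ (a, b)) :=
      ciSup_le fun c => by linarith [key c]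
    linarith
  -- lower semicontinuity of U
  have hUlsc : LowerSemicontinuous U := by
    apply lowerSemicontinuous_ciSup bdd
    intro c
    have : Continuous fun x => chainVal Φ Γ b0 x c := by
      simp only [chainVal]
      fun_prop
    exact this.lowerSemicontinuous
  -- W
  haveI : Nonempty X := ⟨b0.1⟩
  have hWub : ∀ (y : Y) (x : X), Φ (x, y) - U x ≤ 3 * C := by
    intro y x
    have h1 := abs_le.1 (hΦb (x, y))
    have h2 := abs_le.1 (hUbd x)
    linarith
  have bddW : ∀ y : Y, BddAbove (Set.range fun x => Φ (x, y) - U x) := by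
    intro y
    exact ⟨3 * C, by rintro r ⟨x, rfl⟩; exact hWub y x⟩
  set W : Y → ℝ := fun y => ⨆ x : X, (Φ (x, y) - U x) with hW
  have hWineq : ∀ (x : X) (y : Y), Φ (x, y) - U x ≤ W y :=
    fun x y => le_ciSup (bddW y) x
  have hWbd : ∀ y, |W y| ≤ 3 * C := by
    intro y
    rw [abs_le]
    constructor
    · have h1 := abs_le.1 (hΦb (b0.1, y))
      have h2 := abs_le.1 (hUbd b0.1)
      have := hWineq b0.1 y
      linarith
    · exact ciSup_le (hWub y)
  have hWlsc : LowerSemicontinuous W := by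
    apply lowerSemicontinuous_ciSup bddW
    intro x
    have : Continuous fun y => Φ (x, y) - U x := by fun_prop
    exact this.lowerSemicontinuous
  refine ⟨U, W, hUlsc, hWlsc, hUbd, hWbd, ?_, ?_⟩
  · intro p
    have := hWineq p.1 p.2
    linarith
  · intro p hp
    have h1 : Φ p ≤ U p.1 + W p.2 := by have := hWineq p.1 p.2; linarith
    have h2 : W p.2 ≤ Φ p - U p.1 := by
      apply ciSup_le
      intro x
      have := happend p.1 p.2 (by rwa [Prod.mk.eta]) x
      rw [Prod.mk.eta] at this
      linarith
    linarith

end Rockafellar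


/-- Surplus maximization implies stability: if `π` maximizes `∫ Φ` over the couplings
of `μ` and `ν` for a bounded continuous surplus `Φ`, then there is a payoff pair
`(U, W)` with `Φ ≤ U + W` everywhere and equality `π`-a.e. -/
theorem surplus_max_implies_stable
    {X Y : Type*} [MetricSpace X] [CompleteSpace X] [SecondCountableTopology X]
    [MeasurableSpace X] [BorelSpace X]
    [MetricSpace Y] [CompleteSpace Y] [SecondCountableTopology Y]
    [MeasurableSpace Y] [BorelSpace Y]
    (μ : Measure X) (ν : Measure Y) [IsProbabilityMeasure μ] [IsProbabilityMeasure ν]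
    (Φ : X × Y → ℝ) (hΦc : Continuous Φ) (hΦb : ∃ C, ∀ p, |Φ p| ≤ C)
    (π : Measure (X × Y)) [IsProbabilityMeasure π]
    (hπ : π.map Prod.fst = μ ∧ π.map Prod.snd = ν)
    (hopt : ∀ π' : Measure (X × Y), IsProbabilityMeasure π' →
      π'.map Prod.fst = μ → π'.map Prod.snd = ν →
      (∫ p, Φ p ∂π') ≤ ∫ p, Φ p ∂π) :
    ∃ (U : X → ℝ) (W : Y → ℝ), Integrable U μ ∧ Integrable W ν ∧
      (∀ p : X × Y, Φ p ≤ U p.1 + W p.2) ∧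
      (∀ᵐ p ∂π, U p.1 + W p.2 = Φ p) := by
  obtain ⟨hπ1, hπ2⟩ := hπ
  obtain ⟨C, hC⟩ := hΦb
  set Γ : Set (X × Y) := msupp π with hΓ
  have hcompl : π Γᶜ = 0 := compl_msupp_null π
  have hΓne : Γ.Nonempty := by
    rw [Set.nonempty_iff_ne_empty]
    intro h
    have : π Set.univ = 0 := by
      rw [show (Set.univ : Set (X × Y)) = Γᶜ by rw [h, Set.compl_empty]]
      exact hcompl
    rw [measure_univ] at this
    exact one_ne_zero this
  have hopt' : ∀ π' : Measure (X × Y), IsProbabilityMeasure π' →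
      π'.map Prod.fst = π.map Prod.fst → π'.map Prod.snd = π.map Prod.snd →
      (∫ p, Φ p ∂π') ≤ ∫ p, Φ p ∂π := by
    intro π' h h1 h2
    exact hopt π' h (by rw [h1, hπ1]) (by rw [h2, hπ2])
  have hCM := optimal_cm μ ν Φ hΦc C hC π hopt'
  obtain ⟨U, W, hUlsc, hWlsc, hUbd, hWbd, hineq, heq⟩ :=
    rockafellar Φ Γ hΦc C hC hΓne hCM
  refine ⟨U, W, ?_, ?_, hineq, ?_⟩
  · exact (integrable_const (2 * C)).mono' hUlsc.measurable.aestronglyMeasurable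
      (Filter.Eventually.of_forall fun x => by simpa [Real.norm_eq_abs] using hUbd x)
  · exact (integrable_const (3 * C)).mono' hWlsc.measurable.aestronglyMeasurable
      (Filter.Eventually.of_forall fun y => by simpa [Real.norm_eq_abs] using hWbd y)
  · rw [ae_iff]
    refine measure_mono_null ?_ hcompl
    intro p hp
    simp only [Set.mem_setOf_eq] at hp
    intro hpΓ
    exact hp (heq p hpΓ)
end

section
/- (Glivenko–Cantelli / Varadarajan) Let S be a separable metric space, μ ∈ P(S), and X₁, X₂, … i.i.d. S-valued random variables with law μ. Then the empirical measures μₙ = (1/n) Σᵢ₌₁ⁿ δ_{Xᵢ} converge weakly to μ almost surely. -/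
open MeasureTheory Filter BoundedContinuousFunction
open scoped ENNReal

/-- Glivenko–Cantelli / Varadarajan: for i.i.d. samples `X₁, X₂, …` from `μ` on a
separable metric space `S`, the empirical measures `(1/n) ∑ᵢ δ_{Xᵢ}` converge weakly
to `μ` almost surely (weak convergence stated via bounded continuous test functions). -/
theorem varadarajan_empirical
    {S : Type*} [MetricSpace S] [TopologicalSpace.SeparableSpace S] [MeasurableSpace S] [BorelSpace S]
    {Ω : Type*} [MeasurableSpace Ω] (P : Measure Ω) [IsProbabilityMeasure P]
    (μ : Measure S) [IsProbabilityMeasure μ]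
    (X : ℕ → Ω → S) (hmeas : ∀ i, Measurable (X i))
    (hlaw : ∀ i, P.map (X i) = μ)
    (hindep : ProbabilityTheory.iIndepFun X P) :
    ∀ᵐ ω ∂P, ∀ f : S →ᵇ ℝ,
      Tendsto (fun n : ℕ => ∫ s, f s ∂(((n : ℝ≥0∞)⁻¹) •
          ∑ i ∈ Finset.range n, Measure.dirac (X i ω)))
        atTop (nhds (∫ s, f s ∂μ)) := by
  classical
  have hSne : Nonempty S := by
    by_contra h
    rw [not_nonempty_iff] at h
    have h1 : μ Set.univ = 1 := measure_univ
    rw [Set.univ_eq_empty_iff.mpr h] at h1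
    simp at h1
  set u := TopologicalSpace.denseSeq S with hu
  set V : ℕ × ℕ → Set S := fun p => Metric.ball (u p.1) (1 / (p.2 + 1)) with hV
  set U : Finset (ℕ × ℕ) → Set S := fun t => ⋃ p ∈ t, V p with hUdef
  have hVmeas : ∀ p, MeasurableSet (V p) := fun p => measurableSet_ball
  have hUmeas : ∀ t, MeasurableSet (U t) := fun t =>
    t.measurableSet_biUnion (fun p _ => hVmeas p)
  -- Strong law of large numbers for the indicator of each finite union of balls
  have hSLLN : ∀ t : Finset (ℕ × ℕ), ∀ᵐ ω ∂P,
      Tendsto (fun n : ℕ =>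
          (∑ i ∈ Finset.range n, (U t).indicator (fun _ => (1:ℝ)) (X i ω)) / n)
        atTop (nhds ((μ (U t)).toReal)) := by
    intro t
    have hg : Measurable ((U t).indicator (fun _ => (1:ℝ))) :=
      measurable_const.indicator (hUmeas t)
    have hint : Integrable (fun ω => (U t).indicator (fun _ => (1:ℝ)) (X 0 ω)) P := by
      have heq : (fun ω => (U t).indicator (fun _ => (1:ℝ)) (X 0 ω))
          = Set.indicator ((X 0) ⁻¹' (U t)) (fun _ => (1:ℝ)) := by
        ext ω; simp [Set.indicator_apply, Set.mem_preimage]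
      rw [heq]
      exact (integrable_const (1:ℝ)).indicator ((hmeas 0) (hUmeas t))
    have hpind : Pairwise (Function.onFun (ProbabilityTheory.IndepFun · · P)
        (fun i ω => (U t).indicator (fun _ => (1:ℝ)) (X i ω))) := by
      intro i j hij
      exact (hindep.indepFun hij).comp hg hg
    have hid : ∀ i, ProbabilityTheory.IdentDistrib
        (fun ω => (U t).indicator (fun _ => (1:ℝ)) (X i ω))
        (fun ω => (U t).indicator (fun _ => (1:ℝ)) (X 0 ω)) P P := by
      intro i
      have hXid : ProbabilityTheory.IdentDistrib (X i) (X 0) P P :=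
        ⟨(hmeas i).aemeasurable, (hmeas 0).aemeasurable, by rw [hlaw i, hlaw 0]⟩
      exact hXid.comp hg
    have hsll := ProbabilityTheory.strong_law_ae_real
        (fun i ω => (U t).indicator (fun _ => (1:ℝ)) (X i ω)) hint hpind hid
    have hexp : (∫ ω, (U t).indicator (fun _ => (1:ℝ)) (X 0 ω) ∂P) = (μ (U t)).toReal := by
      rw [← integral_map (hmeas 0).aemeasurable hg.aestronglyMeasurable, hlaw 0]
      simpa [Pi.one_def, Measure.real] using integral_indicator_one (hUmeas t)
    rw [hexp] at hsll
    exact hsll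
  have hae : ∀ᵐ ω ∂P, ∀ t : Finset (ℕ × ℕ),
      Tendsto (fun n : ℕ =>
          (∑ i ∈ Finset.range n, (U t).indicator (fun _ => (1:ℝ)) (X i ω)) / n)
        atTop (nhds ((μ (U t)).toReal)) := ae_all_iff.mpr hSLLN
  filter_upwards [hae] with ω hω
  -- the empirical measures
  set g : ℕ → Measure S := fun n => ((n : ℝ≥0∞)⁻¹ •
      ∑ i ∈ Finset.range n, Measure.dirac (X i ω)) with hgdef
  -- counting function
  set c : Set S → ℕ → ℕ := fun E n => ((Finset.range n).filter (fun i => X i ω ∈ E)).card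
    with hcdef
  have hg_apply : ∀ (E : Set S), MeasurableSet E → ∀ n : ℕ,
      g n E = (n : ℝ≥0∞)⁻¹ * (c E n : ℝ≥0∞) := by
    intro E hE n
    rw [hgdef]
    simp only [Measure.smul_apply, smul_eq_mul]
    congr 1
    rw [Measure.finset_sum_apply]
    have : ∀ i, Measure.dirac (X i ω) E = if X i ω ∈ E then (1:ℝ≥0∞) else 0 := by
      intro i
      rw [Measure.dirac_apply' _ hE]
      simp [Set.indicator_apply]
    simp_rw [this]
    rw [Finset.sum_boole]
  have hsum_eq : ∀ (E : Set S) (n : ℕ),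
      (∑ i ∈ Finset.range n, E.indicator (fun _ => (1:ℝ)) (X i ω)) = (c E n : ℝ) := by
    intro E n
    simp_rw [Set.indicator_apply]
    rw [Finset.sum_boole]
  -- ENNReal convergence on each finite union of balls
  have hENN : ∀ t : Finset (ℕ × ℕ),
      Tendsto (fun n : ℕ => g (n + 1) (U t)) atTop (nhds (μ (U t))) := by
    intro t
    have h1 : Tendsto (fun n : ℕ => ((c (U t) (n+1) : ℝ)) / ((n+1 : ℕ) : ℝ))
        atTop (nhds ((μ (U t)).toReal)) := by
      have h0 := (hω t).comp (tendsto_add_atTop_nat 1)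
      simp only [Function.comp, hsum_eq (U t)] at h0
      exact h0
    have h2 : Tendsto (fun n : ℕ => ENNReal.ofReal (((c (U t) (n+1) : ℝ)) / ((n+1 : ℕ) : ℝ)))
        atTop (nhds (ENNReal.ofReal ((μ (U t)).toReal))) :=
      ENNReal.tendsto_ofReal h1
    have hoR : ENNReal.ofReal ((μ (U t)).toReal) = μ (U t) :=
      ENNReal.ofReal_toReal (MeasureTheory.measure_lt_top μ (U t)).ne
    rw [hoR] at h2
    have h3 : ∀ n : ℕ, ENNReal.ofReal (((c (U t) (n+1) : ℝ)) / ((n+1 : ℕ) : ℝ)) = g (n+1) (U t) := by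
      intro n
      rw [hg_apply (U t) (hUmeas t) (n+1)]
      rw [ENNReal.ofReal_div_of_pos (by positivity)]
      rw [ENNReal.div_eq_inv_mul]
      congr 1
      · congr 1
        exact_mod_cast ENNReal.ofReal_natCast (n+1)
      · exact ENNReal.ofReal_natCast _
    simp_rw [h3] at h2
    exact h2
  -- the open-set liminf condition
  have h_opens : ∀ G : Set S, IsOpen G → μ G ≤ atTop.liminf (fun n => g (n + 1) G) := by
    intro G hG
    set e : ℕ → ℕ × ℕ := fun k => (Denumerable.eqv (ℕ × ℕ)).symm k with he
    set t : ℕ → Finset (ℕ × ℕ) :=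
      fun k => ((Finset.range k).image e).filter (fun p => V p ⊆ G) with ht
    have ht_sub : ∀ k, U (t k) ⊆ G := by
      intro k x hx
      rw [hUdef] at hx
      simp only [Set.mem_iUnion] at hx
      obtain ⟨p, hp, hxp⟩ := hx
      rw [ht] at hp
      simp only [Finset.mem_filter] at hp
      exact hp.2 hxp
    have ht_mono : Monotone (fun k => U (t k)) := by
      intro k l hkl x hx
      rw [hUdef] at hx ⊢
      simp only [Set.mem_iUnion] at hx ⊢
      obtain ⟨p, hp, hxp⟩ := hx
      refine ⟨p, ?_, hxp⟩
      rw [ht] at hp ⊢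
      simp only [Finset.mem_filter, Finset.mem_image, Finset.mem_range] at hp ⊢
      obtain ⟨⟨m, hm, hme⟩, hsub⟩ := hp
      exact ⟨⟨m, lt_of_lt_of_le hm hkl, hme⟩, hsub⟩
    have ht_union : (⋃ k, U (t k)) = G := by
      apply Set.Subset.antisymm
      · exact Set.iUnion_subset ht_sub
      · intro y hy
        obtain ⟨ε, hε, hball⟩ := Metric.isOpen_iff.mp hG y hy
        obtain ⟨j, hj⟩ : ∃ j : ℕ, 2 / (j + 1 : ℝ) < ε := by
          obtain ⟨j, hj⟩ := exists_nat_gt (2 / ε)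
          refine ⟨j, ?_⟩
          rw [div_lt_iff₀ (by positivity)]
          calc (2:ℝ) = (2 / ε) * ε := by field_simp
            _ < (j:ℝ) * ε := by
                apply mul_lt_mul_of_pos_right hj hε
            _ ≤ ε * (j + 1) := by nlinarith
        obtain ⟨i, hi⟩ : ∃ i : ℕ, dist y (u i) < 1 / (j + 1 : ℝ) := by
          have hd := TopologicalSpace.denseRange_denseSeq S
          obtain ⟨z, hz⟩ := Metric.dense_iff.mp hd y (1 / (j + 1 : ℝ)) (by positivity)
          obtain ⟨i, rfl⟩ := hz.2
          have := hz.1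
          rw [Metric.mem_ball] at this
          exact ⟨i, by rwa [dist_comm]⟩
        have hyV : y ∈ V (i, j) := by
          rw [hV]
          simpa [Metric.mem_ball] using hi
        have hVG : V (i, j) ⊆ G := by
          intro z hz
          apply hball
          rw [Metric.mem_ball]
          rw [hV] at hz
          simp only [Metric.mem_ball] at hz
          calc dist z y ≤ dist z (u i) + dist (u i) y := dist_triangle _ _ _
            _ < 1 / (j + 1 : ℝ) + 1 / (j + 1 : ℝ) := by
                rw [dist_comm (u i) y]; exact add_lt_add hz hi
            _ = 2 / (j + 1 : ℝ) := by ring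
            _ < ε := hj
        set k := Denumerable.eqv (ℕ × ℕ) (i, j) + 1 with hk
        have hmem : (i, j) ∈ t k := by
          rw [ht]
          simp only [Finset.mem_filter, Finset.mem_image, Finset.mem_range]
          refine ⟨⟨Denumerable.eqv (ℕ × ℕ) (i, j), by omega, ?_⟩, hVG⟩
          rw [he]; simp
        refine Set.mem_iUnion.mpr ⟨k, ?_⟩
        rw [hUdef]
        exact Set.mem_biUnion hmem hyV
    have h3 : Tendsto (fun k => μ (U (t k))) atTop (nhds (μ G)) := by
      rw [← ht_union]
      exact tendsto_measure_iUnion_atTop ht_mono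
    refine le_of_tendsto' h3 (fun k => ?_)
    calc μ (U (t k)) = atTop.liminf (fun n => g (n + 1) (U (t k))) :=
          (hENN (t k)).liminf_eq.symm
      _ ≤ atTop.liminf (fun n => g (n + 1) G) := by
          exact liminf_le_liminf (Eventually.of_forall (fun n => measure_mono (ht_sub k)))
  have hμprob : IsProbabilityMeasure μ := inferInstance
  -- probability measure instances
  have hgprob : ∀ n : ℕ, IsProbabilityMeasure (g (n + 1)) := by
    intro n
    constructor
    rw [hg_apply Set.univ MeasurableSet.univ (n + 1)]
    have : c Set.univ (n + 1) = n + 1 := by simp [hcdef]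
    rw [this]
    rw [ENNReal.inv_mul_cancel (by exact_mod_cast Nat.succ_ne_zero n) (by simp)]
  intro f
  have key : Tendsto (fun n => ∫ s, f s ∂ (g (n + 1))) atTop (nhds (∫ s, f s ∂μ)) :=
    @tendsto_integral_of_forall_integral_le_liminf_integral S _ _ _ ℕ atTop μ
      hμprob (fun n => g (n + 1)) hgprob
      (fun f' hf' =>
        @integral_le_liminf_integral_of_forall_isOpen_measure_le_liminf_measure S _ _ _ μ
          (fun n => g (n + 1)) hgprob f' hf' h_opens) f
  exact (tendsto_add_atTop_iff_nat 1).mp key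
end
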